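/- Let Λ ∈ (0, 1], γ ∈ (0, 1), C ≥ 0, and let E : ℝ → ℝ be differentiable with |E'(x)| ≤ 3/4 for all x and |E'(x) − E'(y)| ≤ C·|x − y|^γ for all x, y. Fix P ∈ ℝ and define, for k ∈ ℝ³ with k₃ ≠ 0, D(k) = E(P − k₃) − E(P) and g(k) = D(k) / (k₃ · ‖k‖^{1/2} · (D(k) + ‖k‖)) (note D(k) + ‖k‖ ≥ ‖k‖/4 > 0 for k ≠ 0, so g is well defined; set g(k) = 0 when k₃ = 0). Then the function k ↦ (1 − k₃²/‖k‖²) · g(k)² is integrable on {k ∈ ℝ³ : 0 < ‖k‖ ≤ Λ} with respect to Lebesgue measure if and only if E'(P) = 0. -/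

import Mathlib

open MeasureTheory
open scoped ENNReal NNReal

noncomputable section



lemma norm_sq_eq3 (k : EuclideanSpace ℝ (Fin 3)) : ‖k‖ ^ 2 = (k 0)^2 + (k 1)^2 + (k 2)^2 := by
  rw [EuclideanSpace.norm_eq, Real.sq_sqrt (by positivity)]
  simp [Fin.sum_univ_three, sq_abs]

lemma mvt_exists (E : ℝ → ℝ) (hE : Differentiable ℝ E) (P s : ℝ) :
    ∃ c : ℝ, |P - c| ≤ |s| ∧ E (P - s) - E P = deriv E c * (-s) := by
  rcases lt_trichotomy s 0 with hs | hs | hs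
  · obtain ⟨c, hc, hderiv⟩ := exists_deriv_eq_slope E (by linarith : P < P - s)
      (hE.continuous.continuousOn) (fun x _ => (hE x).differentiableWithinAt)
    rw [show P - s - P = -s by ring, eq_div_iff (by simpa using hs.ne)] at hderiv
    refine ⟨c, ?_, hderiv.symm⟩
    rcases hc with ⟨h1, h2⟩
    rw [abs_of_neg hs, abs_le]
    constructor <;> linarith
  · exact ⟨P, by simp [hs]⟩
  · obtain ⟨c, hc, hderiv⟩ := exists_deriv_eq_slope E (by linarith : P - s < P)
      (hE.continuous.continuousOn) (fun x _ => (hE x).differentiableWithinAt)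
    rw [show P - (P - s) = s by ring, eq_div_iff hs.ne'] at hderiv
    refine ⟨c, ?_, by linarith⟩
    rcases hc with ⟨h1, h2⟩
    rw [abs_of_pos hs, abs_le]
    constructor <;> linarith

lemma mvt_bound (C γ : ℝ) (hγ0 : 0 < γ) (hC : 0 ≤ C) (E : ℝ → ℝ) (hE : Differentiable ℝ E)
    (hE' : ∀ x : ℝ, |deriv E x| ≤ 3 / 4)
    (hHol : ∀ x y : ℝ, |deriv E x - deriv E y| ≤ C * |x - y| ^ γ)
    (P s : ℝ) :
    |E (P - s) - E P| ≤ 3/4 * |s| ∧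
    |E (P - s) - E P + deriv E P * s| ≤ C * |s| ^ γ * |s| := by
  obtain ⟨c, hcP, hslope⟩ := mvt_exists E hE P s
  constructor
  · rw [hslope, abs_mul, abs_neg]
    exact mul_le_mul_of_nonneg_right (hE' c) (abs_nonneg s)
  · rw [hslope, show deriv E c * (-s) + deriv E P * s = (deriv E P - deriv E c) * s by ring,
      abs_mul]
    apply mul_le_mul_of_nonneg_right _ (abs_nonneg s)
    calc |deriv E P - deriv E c| ≤ C * |P - c| ^ γ := hHol P c
      _ ≤ C * |s| ^ γ :=
        mul_le_mul_of_nonneg_left (Real.rpow_le_rpow (abs_nonneg _) hcP hγ0.le) hC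

lemma coord_le_norm (k : EuclideanSpace ℝ (Fin 3)) (i : Fin 3) : |k i| ≤ ‖k‖ := by
  rw [EuclideanSpace.norm_eq]
  rw [show |k i| = Real.sqrt (‖k i‖ ^ 2) by rw [Real.sqrt_sq_eq_abs]; simp]
  apply Real.sqrt_le_sqrt
  exact Finset.single_le_sum (f := fun j => ‖k j‖ ^ 2) (fun j _ => by positivity) (Finset.mem_univ i)

-- square of g
lemma g_sq (D g : EuclideanSpace ℝ (Fin 3) → ℝ)
    (hg : ∀ k : EuclideanSpace ℝ (Fin 3),
      g k = if k 2 = 0 then 0 else D k / (k 2 * ‖k‖ ^ ((1 : ℝ) / 2) * (D k + ‖k‖)))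
    (k : EuclideanSpace ℝ (Fin 3)) (hk : 0 < ‖k‖) (hs : k 2 ≠ 0) :
    (g k)^2 = (D k)^2 / ((k 2)^2 * ‖k‖ * (D k + ‖k‖)^2) := by
  rw [hg k, if_neg hs, div_pow]
  congr 1
  rw [mul_pow, mul_pow]
  rw [show (‖k‖ ^ ((1:ℝ)/2))^2 = ‖k‖ ^ ((1:ℝ)/2) * ‖k‖ ^ ((1:ℝ)/2) by ring,
    ← Real.rpow_add hk]
  norm_num

lemma pointwise_upper (γ C : ℝ) (hγ0 : 0 < γ) (hC : 0 ≤ C)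
    (D g : EuclideanSpace ℝ (Fin 3) → ℝ)
    (hg : ∀ k : EuclideanSpace ℝ (Fin 3),
      g k = if k 2 = 0 then 0 else D k / (k 2 * ‖k‖ ^ ((1 : ℝ) / 2) * (D k + ‖k‖)))
    (hDb : ∀ k : EuclideanSpace ℝ (Fin 3), |D k| ≤ 3/4 * |k 2|)
    (hDb2 : ∀ k : EuclideanSpace ℝ (Fin 3), |D k| ≤ C * |k 2| ^ γ * |k 2|)
    (k : EuclideanSpace ℝ (Fin 3)) (hk : 0 < ‖k‖) :
    |(1 - (k 2)^2/‖k‖^2) * (g k)^2| ≤ 16 * C^2 * ‖k‖ ^ (2*γ - 3) := by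
  have hcoord := coord_le_norm k 2
  have ht0 : 0 ≤ 1 - (k 2)^2/‖k‖^2 := by
    rw [sub_nonneg, div_le_one (by positivity)]
    nlinarith [sq_abs (k 2), mul_self_le_mul_self (abs_nonneg (k 2)) hcoord]
  have ht1 : 1 - (k 2)^2/‖k‖^2 ≤ 1 := by
    nlinarith [div_nonneg (sq_nonneg (k 2)) (sq_nonneg ‖k‖)]
  by_cases hs : k 2 = 0
  · rw [hg k, if_pos hs]
    rw [show ((0:ℝ))^2 = 0 by ring, mul_zero, abs_zero]
    positivity
  · rw [abs_mul, abs_of_nonneg ht0, g_sq D g hg k hk hs, abs_of_nonneg (by positivity)]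
    have hsne : (0:ℝ) < (k 2)^2 := by positivity
    have hd : D k + ‖k‖ ≥ ‖k‖/4 := by
      have := hDb k
      have h1 : |k 2| ≤ ‖k‖ := hcoord
      have := abs_le.1 (hDb k)
      linarith [abs_nonneg (k 2)]
    have hdpos : 0 < D k + ‖k‖ := by linarith
    have hd2 : ‖k‖^2/16 ≤ (D k + ‖k‖)^2 := by nlinarith
    have hnum : (D k)^2 ≤ C^2 * |k 2| ^ (2*γ) * (k 2)^2 := by
      have h2 := hDb2 k
      have h3 : (D k)^2 ≤ (C * |k 2| ^ γ * |k 2|)^2 := by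
        have := abs_nonneg (D k)
        nlinarith [abs_le.1 h2, sq_abs (D k)]
      calc (D k)^2 ≤ (C * |k 2| ^ γ * |k 2|)^2 := h3
        _ = C^2 * (|k 2| ^ γ)^2 * (k 2)^2 := by rw [mul_pow, mul_pow, sq_abs]
        _ = C^2 * |k 2| ^ (2*γ) * (k 2)^2 := by
            rw [show (|k 2| ^ γ)^2 = |k 2| ^ γ * |k 2| ^ γ by ring,
              ← Real.rpow_add' (abs_nonneg _) (by linarith)]
            ring_nf
    calc (1 - (k 2)^2/‖k‖^2) * ((D k)^2 / ((k 2)^2 * ‖k‖ * (D k + ‖k‖)^2))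
        ≤ 1 * ((D k)^2 / ((k 2)^2 * ‖k‖ * (D k + ‖k‖)^2)) := by
          apply mul_le_mul_of_nonneg_right ht1 (by positivity)
      _ = (D k)^2 / ((k 2)^2 * ‖k‖ * (D k + ‖k‖)^2) := one_mul _
      _ ≤ (C^2 * |k 2| ^ (2*γ) * (k 2)^2) / ((k 2)^2 * ‖k‖ * (‖k‖^2/16)) := by
          gcongr
      _ = 16 * C^2 * |k 2| ^ (2*γ) / ‖k‖^3 := by field_simp
      _ ≤ 16 * C^2 * ‖k‖ ^ (2*γ) / ‖k‖^3 := by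
          gcongr ?_ / ‖k‖^3
          exact mul_le_mul_of_nonneg_left
            (Real.rpow_le_rpow (abs_nonneg _) hcoord (by linarith)) (by positivity)
      _ = 16 * C^2 * ‖k‖ ^ (2*γ - 3) := by
          have h3 : ‖k‖ ^ ((3:ℝ)) = ‖k‖ ^ (3:ℕ) := by
            rw [← Real.rpow_natCast ‖k‖ 3]; norm_num
          rw [Real.rpow_sub hk, h3, mul_div_assoc]

lemma geom_form (Λ γ M : ℝ) (hΛ0 : 0 < Λ) :
    ∀ n : ℕ, M * (Λ/2^(n+1+1)) ^ (2*γ-3) * (Λ/2^(n+1))^3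
      = (2:ℝ) ^ (-(2*γ)) * (M * (Λ/2^(n+1)) ^ (2*γ-3) * (Λ/2^n)^3) := by
  intro n
  have h2 : (0:ℝ) < 2 := two_pos
  have e1 : (Λ/2^(n+2) : ℝ) = (Λ/2^(n+1)) * 2⁻¹ := by ring
  have e2 : ((Λ/2^(n+2)) : ℝ) ^ (2*γ-3)
      = (Λ/2^(n+1)) ^ (2*γ-3) * (2:ℝ) ^ (-(2*γ-3)) := by
    rw [e1, Real.mul_rpow (by positivity) (by positivity), Real.inv_rpow h2.le,
      ← Real.rpow_neg h2.le]
  have e3 : (2:ℝ) ^ (-(2*γ-3)) = (2:ℝ) ^ (-(2*γ)) * 8 := by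
    rw [show -(2*γ-3) = -(2*γ) + 3 by ring, Real.rpow_add h2,
      show ((3:ℝ)) = ((3:ℕ):ℝ) by norm_num, Real.rpow_natCast]
    norm_num
  have e4 : ((Λ/2^(n+1)):ℝ)^3 = (Λ/2^n)^3 / 8 := by
    field_simp
    ring
  rw [show n+1+1 = n+2 from rfl, e2, e3, e4]
  ring

lemma annuli_integrable (Λ γ M : ℝ) (hΛ0 : 0 < Λ) (hγ0 : 0 < γ) (hγ1 : γ < 1) (hM : 0 ≤ M)
    (f : EuclideanSpace ℝ (Fin 3) → ℝ) (hfm : Measurable f)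
    (hbound : ∀ k : EuclideanSpace ℝ (Fin 3), 0 < ‖k‖ → |f k| ≤ M * ‖k‖ ^ (2*γ-3)) :
    IntegrableOn f {k : EuclideanSpace ℝ (Fin 3) | 0 < ‖k‖ ∧ ‖k‖ ≤ Λ} := by
  set S := {k : EuclideanSpace ℝ (Fin 3) | 0 < ‖k‖ ∧ ‖k‖ ≤ Λ} with hSdef
  set A : ℕ → Set (EuclideanSpace ℝ (Fin 3)) :=
    fun n => {k | Λ/2^(n+1) < ‖k‖ ∧ ‖k‖ ≤ Λ/2^n} with hAdef
  have hAm : ∀ n, MeasurableSet (A n) := fun n =>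
    (measurableSet_lt measurable_const measurable_norm).inter
      (measurableSet_le measurable_norm measurable_const)
  have hcover : S ⊆ ⋃ n, A n := by
    rintro k ⟨hk0, hkΛ⟩
    have hex : ∃ n : ℕ, Λ/2^(n+1) < ‖k‖ := by
      obtain ⟨n, hn⟩ := pow_unbounded_of_one_lt (Λ/‖k‖) (one_lt_two (α := ℝ))
      refine ⟨n, ?_⟩
      rw [div_lt_iff₀ (by positivity)] at hn ⊢
      calc Λ < ‖k‖ * 2^n := by linarith
        _ ≤ ‖k‖ * 2^(n+1) := by
            have : (2:ℝ)^n ≤ 2^(n+1) := by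
              apply pow_le_pow_right₀ one_le_two (Nat.le_succ n)
            nlinarith
    have hmem : k ∈ A (Nat.find hex) := by
      refine ⟨Nat.find_spec hex, ?_⟩
      rcases Nat.eq_zero_or_pos (Nat.find hex) with h0 | hpos
      · rw [h0]; simpa using hkΛ
      · obtain ⟨m, hm⟩ : ∃ m, Nat.find hex = m + 1 := ⟨Nat.find hex - 1, by omega⟩
        rw [hm]
        have hmin := Nat.find_min hex (by omega : m < Nat.find hex)
        push_neg at hmin
        simpa using hmin
    exact Set.mem_iUnion.2 ⟨_, hmem⟩
  set u : ℕ → ℝ := fun n => M * (Λ/2^(n+1)) ^ (2*γ-3) * (Λ/2^n)^3 with hu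
  have hunn : ∀ n, 0 ≤ u n := fun n => by positivity
  have husum : Summable u := by
    set r : ℝ := (2:ℝ) ^ (-(2*γ)) with hr
    have hform : ∀ n, u n = u 0 * r ^ n := by
      intro n
      induction n with
      | zero => simp
      | succ m ih =>
        have := geom_form Λ γ M hΛ0 m
        calc u (m+1) = r * u m := this
          _ = u 0 * r ^ (m+1) := by rw [ih]; ring
    rw [funext hform]
    exact (summable_geometric_of_lt_one (by positivity)
      (Real.rpow_lt_one_of_one_lt_of_neg one_lt_two (by linarith))).mul_left _
  set V : ℝ≥0∞ := volume (Metric.ball (0 : EuclideanSpace ℝ (Fin 3)) 1) with hV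
  have hVlt : V < ⊤ := measure_ball_lt_top
  refine ⟨hfm.aestronglyMeasurable, ?_⟩
  rw [HasFiniteIntegral]
  have key : ∀ n, ∫⁻ a in A n, ‖f a‖₊ ≤ ENNReal.ofReal (u n) * V := by
    intro n
    have hb : (0:ℝ) < Λ/2^(n+1) := by positivity
    calc ∫⁻ a in A n, ‖f a‖₊
        ≤ ∫⁻ _ in A n, ENNReal.ofReal (M * (Λ/2^(n+1)) ^ (2*γ-3)) := by
          apply setLIntegral_mono measurable_const
          intro x hx
          rw [← enorm_eq_nnnorm, Real.enorm_eq_ofReal_abs]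
          apply ENNReal.ofReal_le_ofReal
          calc |f x| ≤ M * ‖x‖ ^ (2*γ-3) := hbound x (hb.trans hx.1)
            _ ≤ M * (Λ/2^(n+1)) ^ (2*γ-3) := by
                apply mul_le_mul_of_nonneg_left _ hM
                exact Real.rpow_le_rpow_of_nonpos hb hx.1.le (by linarith)
      _ = ENNReal.ofReal (M * (Λ/2^(n+1)) ^ (2*γ-3)) * volume (A n) :=
          setLIntegral_const _ _
      _ ≤ ENNReal.ofReal (M * (Λ/2^(n+1)) ^ (2*γ-3))
            * (ENNReal.ofReal ((Λ/2^n)^3) * V) := by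
          apply mul_le_mul_right
          have hsub : A n ⊆ Metric.closedBall (0 : EuclideanSpace ℝ (Fin 3)) (Λ/2^n) := by
            intro x hx
            rw [Metric.mem_closedBall, dist_zero_right]
            exact hx.2
          calc volume (A n) ≤ volume (Metric.closedBall (0 : EuclideanSpace ℝ (Fin 3)) (Λ/2^n)) :=
                measure_mono hsub
            _ = ENNReal.ofReal ((Λ/2^n) ^ Module.finrank ℝ (EuclideanSpace ℝ (Fin 3))) * V :=
                Measure.addHaar_closedBall _ _ (by positivity)
            _ = ENNReal.ofReal ((Λ/2^n)^3) * V := by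
                rw [finrank_euclideanSpace_fin]
      _ = ENNReal.ofReal (u n) * V := by
          rw [← mul_assoc, ← ENNReal.ofReal_mul (by positivity)]
  calc ∫⁻ a in S, ‖f a‖₊ ≤ ∫⁻ a in ⋃ n, A n, ‖f a‖₊ := lintegral_mono_set hcover
    _ ≤ ∑' n, ∫⁻ a in A n, ‖f a‖₊ := lintegral_iUnion_le _ _
    _ ≤ ∑' n, ENNReal.ofReal (u n) * V := ENNReal.tsum_le_tsum key
    _ = ENNReal.ofReal (∑' n, u n) * V := by
        rw [ENNReal.tsum_mul_right, ENNReal.ofReal_tsum_of_nonneg hunn husum]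
    _ < ⊤ := ENNReal.mul_lt_top ENNReal.ofReal_lt_top hVlt

lemma core_lower (a b s d n : ℝ) (hb : 0 < b) (hs : s ≠ 0)
    (hs2 : s^2 < b^2) (hn2lo : 2*b^2 < n^2) (hnpos : 0 < n) (hnhi : n < 3*b)
    (hd2 : a^2/4 * s^2 ≤ d^2) (hdn_hi : d + n ≤ 21/4*b) (hdn_pos : 0 < d + n) :
    2*a^2/(1323*b^3) ≤ (1 - s^2/n^2) * (d^2 / (s^2 * n * (d+n)^2)) := by
  have hk2 : (0:ℝ) < s^2 := lt_of_le_of_ne (sq_nonneg _) (Ne.symm (pow_ne_zero 2 hs))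
  have ht : 1/2 ≤ 1 - s^2/n^2 := by
    have : s^2/n^2 ≤ 1/2 := by
      rw [div_le_iff₀ (by positivity)]
      nlinarith
    linarith
  have hglo : 4*a^2/(1323*b^3) ≤ d^2 / (s^2 * n * (d+n)^2) := by
    have hden_hi : s^2 * n * (d+n)^2 ≤ s^2 * (3*b) * (21/4*b)^2 := by
      have h6 : (d+n)^2 ≤ (21/4*b)^2 := by nlinarith
      have h7 : n * (d+n)^2 ≤ (3*b) * (21/4*b)^2 := by nlinarith
      nlinarith
    calc 4*a^2/(1323*b^3) = (a^2/4 * s^2) / (s^2 * (3*b) * (21/4*b)^2) := by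
          field_simp
          ring
      _ ≤ d^2 / (s^2 * n * (d+n)^2) :=
          div_le_div₀ (sq_nonneg _) hd2
            (mul_pos (mul_pos hk2 hnpos) (pow_pos hdn_pos 2)) hden_hi
  calc 2*a^2/(1323*b^3) = (1/2) * (4*a^2/(1323*b^3)) := by ring
    _ ≤ (1 - s^2/n^2) * (d^2 / (s^2 * n * (d+n)^2)) := by
        apply mul_le_mul ht hglo (by positivity) (by linarith)

lemma pointwise_lower (a : ℝ) (D g : EuclideanSpace ℝ (Fin 3) → ℝ)
    (hg : ∀ k : EuclideanSpace ℝ (Fin 3),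
      g k = if k 2 = 0 then 0 else D k / (k 2 * ‖k‖ ^ ((1 : ℝ) / 2) * (D k + ‖k‖)))
    (b : ℝ) (hb : 0 < b) (k : EuclideanSpace ℝ (Fin 3))
    (h0 : k 0 ∈ Set.Ioo b (2*b)) (h1 : k 1 ∈ Set.Ioo b (2*b))
    (h2 : k 2 ∈ Set.Ioo (-b) b) (hs : k 2 ≠ 0)
    (hDb : |D k| ≤ 3/4 * |k 2|) (hDa : |D k + a * k 2| ≤ |a|/2 * |k 2|) :
    2*a^2/(1323*b^3) ≤ (1 - (k 2)^2/‖k‖^2) * (g k)^2 := by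
  obtain ⟨h01, h02⟩ := h0
  obtain ⟨h11, h12⟩ := h1
  obtain ⟨h21, h22⟩ := h2
  have hs2 : (k 2)^2 < b^2 := by nlinarith
  have hsq := norm_sq_eq3 k
  have hn2lo : 2*b^2 < ‖k‖^2 := by nlinarith
  have hn2hi : ‖k‖^2 < 9*b^2 := by nlinarith
  have hnpos : 0 < ‖k‖ := by nlinarith [norm_nonneg k]
  have hnhi : ‖k‖ < 3*b := by nlinarith [norm_nonneg k]
  have habsb : |k 2| ≤ b := (abs_lt.2 ⟨h21, h22⟩).le
  have hDb' := abs_le.1 hDb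
  have hd2 : a^2/4 * (k 2)^2 ≤ (D k)^2 := by
    have h3 : |a * k 2| ≤ |D k + a * k 2| + |D k| := by
      have := abs_sub (D k + a * k 2) (D k)
      simpa using this
    have h4 := abs_mul a (k 2)
    have h5 : |a|/2 * |k 2| ≤ |D k| := by linarith
    have h6 := mul_self_le_mul_self (by positivity : (0:ℝ) ≤ |a|/2 * |k 2|) h5
    have e1 : (|a|/2 * |k 2|)*(|a|/2 * |k 2|) = |a|^2 * |k 2|^2/4 := by ring
    rw [sq_abs, sq_abs] at e1
    have e2 : |D k| * |D k| = (D k)^2 := by rw [← sq, sq_abs]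
    linarith
  have hdn_hi : D k + ‖k‖ ≤ 21/4 * b := by linarith
  have hdn_pos : 0 < D k + ‖k‖ := by nlinarith [hDb'.1, habsb, hnpos, hn2lo]
  rw [g_sq D g hg k hnpos hs]
  exact core_lower a b (k 2) (D k) ‖k‖ hb hs hs2 hn2lo hnpos hnhi hd2 hdn_hi hdn_pos

lemma not_integrable (Λ γ C a : ℝ) (hΛ0 : 0 < Λ) (hγ0 : 0 < γ) (hC : 0 ≤ C) (ha : a ≠ 0)
    (D g : EuclideanSpace ℝ (Fin 3) → ℝ)
    (hg : ∀ k : EuclideanSpace ℝ (Fin 3),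
      g k = if k 2 = 0 then 0 else D k / (k 2 * ‖k‖ ^ ((1 : ℝ) / 2) * (D k + ‖k‖)))
    (hDb : ∀ k : EuclideanSpace ℝ (Fin 3), |D k| ≤ 3/4 * |k 2|)
    (hDa : ∀ k : EuclideanSpace ℝ (Fin 3), |D k + a * k 2| ≤ C * |k 2| ^ γ * |k 2|) :
    ¬ IntegrableOn
        (fun k : EuclideanSpace ℝ (Fin 3) => (1 - (k 2) ^ 2 / ‖k‖ ^ 2) * (g k) ^ 2)
        {k : EuclideanSpace ℝ (Fin 3) | 0 < ‖k‖ ∧ ‖k‖ ≤ Λ} := by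
  intro hint
  set f : EuclideanSpace ℝ (Fin 3) → ℝ :=
    fun k => (1 - (k 2) ^ 2 / ‖k‖ ^ 2) * (g k) ^ 2 with hf
  have hapos : 0 < |a| := abs_pos.2 ha
  set x := |a|/(2*(C+1)) with hx
  have hxpos : 0 < x := div_pos hapos (by linarith)
  set δ' := x ^ γ⁻¹ with hδ'
  have hδpos : 0 < δ' := Real.rpow_pos_of_pos hxpos _
  set a0 := min (Λ/3) δ' with ha0def
  have ha0 : 0 < a0 := lt_min (by linarith) hδpos
  have ha0Λ : a0 ≤ Λ/3 := min_le_left _ _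
  have ha0δ : a0 ≤ δ' := min_le_right _ _
  have hkey : ∀ s : ℝ, |s| ≤ a0 → C * |s| ^ γ ≤ |a|/2 := by
    intro s hsa
    have h1 : |s| ^ γ ≤ δ' ^ γ :=
      Real.rpow_le_rpow (abs_nonneg _) (hsa.trans ha0δ) hγ0.le
    have h2 : δ' ^ γ = x := Real.rpow_inv_rpow hxpos.le (ne_of_gt hγ0)
    calc C * |s|^γ ≤ C * x := by
          rw [← h2]; exact mul_le_mul_of_nonneg_left h1 hC
      _ ≤ (C+1) * x := by nlinarith
      _ = |a|/2 := by rw [hx]; field_simp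
  set b : ℕ → ℝ := fun n => a0 / 2^n with hb
  have hbpos : ∀ n, 0 < b n := fun n => by positivity
  have hba0 : ∀ n, b n ≤ a0 := fun n =>
    div_le_self ha0.le (one_le_pow₀ one_le_two)
  set B : ℕ → Set (EuclideanSpace ℝ (Fin 3)) := fun n =>
    {k | k 0 ∈ Set.Ioo (b n) (2*b n) ∧ k 1 ∈ Set.Ioo (b n) (2*b n)
      ∧ k 2 ∈ Set.Ioo (-(b n)) (b n)} with hB
  have hBm : ∀ n, MeasurableSet (B n) := by
    intro n
    exact (((measurable_pi_apply 0).comp (WithLp.measurable_ofLp 2 (Fin 3 → ℝ))) measurableSet_Ioo).inter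
      ((((measurable_pi_apply 1).comp (WithLp.measurable_ofLp 2 (Fin 3 → ℝ))) measurableSet_Ioo).inter
        (((measurable_pi_apply 2).comp (WithLp.measurable_ofLp 2 (Fin 3 → ℝ))) measurableSet_Ioo))
  have hBsub : ∀ n, B n ⊆ {k : EuclideanSpace ℝ (Fin 3) | 0 < ‖k‖ ∧ ‖k‖ ≤ Λ} := by
    rintro n k ⟨⟨h01, h02⟩, ⟨h11, h12⟩, ⟨h21, h22⟩⟩
    have hsq := norm_sq_eq3 k
    have hbn := hbpos n
    have h3b : 3 * b n ≤ Λ := by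
      have := hba0 n
      linarith
    constructor
    · nlinarith [norm_nonneg k]
    · nlinarith [norm_nonneg k]
  have hBdisj : Pairwise (Function.onFun Disjoint B) := by
    have key : ∀ m n : ℕ, m < n → Disjoint (B m) (B n) := by
      intro m n hmn
      rw [Set.disjoint_left]
      rintro k ⟨⟨hm1, hm2⟩, _, _⟩ ⟨⟨hn1, hn2⟩, _, _⟩
      have hpow : (2:ℝ)^(m+1) ≤ 2^n := pow_le_pow_right₀ one_le_two hmn
      have h1 : 2 * b n ≤ b m := by
        show 2 * (a0/2^n) ≤ a0/2^m
        rw [show 2 * (a0/2^n) = (2*a0)/2^n by ring,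
          div_le_div_iff₀ (by positivity) (by positivity)]
        have hps : (2:ℝ)^(m+1) = 2^m*2 := pow_succ 2 m
        nlinarith
      linarith
    intro m n hmn
    rcases lt_or_gt_of_ne hmn with h | h
    · exact key m n h
    · exact (key n m h).symm
  have hZ : volume {k : EuclideanSpace ℝ (Fin 3) | k 2 = 0} = 0 := by
    have hmp := EuclideanSpace.volume_preserving_symm_measurableEquiv_toLp (Fin 3)
    set T : Set (Fin 3 → ℝ) := Set.univ.pi ![Set.univ, Set.univ, {0}] with hT
    have hTm : MeasurableSet T :=
      MeasurableSet.univ_pi (fun i => by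
        fin_cases i <;> first | exact MeasurableSet.univ | exact measurableSet_singleton 0)
    have hpre : (MeasurableEquiv.toLp 2 (Fin 3 → ℝ)).symm ⁻¹' T
        = {k : EuclideanSpace ℝ (Fin 3) | k 2 = 0} := by
      ext k
      simp only [Set.mem_preimage, hT, Set.mem_pi, Set.mem_univ, forall_true_left,
        Set.mem_setOf_eq]
      constructor
      · intro h
        simpa using h 2
      · intro h i
        fin_cases i <;> simp [h]
    rw [← hpre, hmp.measure_preimage hTm.nullMeasurableSet, hT, volume_pi_pi,
      Fin.prod_univ_three]
    simp
  have hvol : ∀ n, volume (B n)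
      = ENNReal.ofReal (2*b n - b n) * ENNReal.ofReal (2*b n - b n)
        * ENNReal.ofReal (b n - -(b n)) := by
    intro n
    have hmp := EuclideanSpace.volume_preserving_symm_measurableEquiv_toLp (Fin 3)
    set T : Set (Fin 3 → ℝ) :=
      Set.univ.pi ![Set.Ioo (b n) (2*b n), Set.Ioo (b n) (2*b n),
        Set.Ioo (-(b n)) (b n)] with hT
    have hTm : MeasurableSet T :=
      MeasurableSet.univ_pi (fun i => by fin_cases i <;> exact measurableSet_Ioo)
    have hpre : (MeasurableEquiv.toLp 2 (Fin 3 → ℝ)).symm ⁻¹' T = B n := by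
      ext k
      simp only [Set.mem_preimage, hT, Set.mem_pi, Set.mem_univ, forall_true_left,
        Set.mem_setOf_eq, hB]
      constructor
      · intro h
        exact ⟨h 0, h 1, h 2⟩
      · rintro ⟨h0, h1, h2⟩ i
        fin_cases i <;> assumption
    calc volume (B n) = volume T := by
          rw [← hpre]; exact hmp.measure_preimage hTm.nullMeasurableSet
      _ = _ := by
          rw [hT, volume_pi_pi, Fin.prod_univ_three]
          simp [Real.volume_Ioo]
  have hκpos : (0:ℝ) < 4*a^2/1323 := by
    have h2 : (0:ℝ) < a^2 := lt_of_le_of_ne (sq_nonneg a) (Ne.symm (pow_ne_zero 2 ha))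
    exact div_pos (by linarith) (by norm_num)
  have hlow : ∀ n, ENNReal.ofReal (4*a^2/1323) ≤ ∫⁻ k in B n, ENNReal.ofReal (f k) := by
    intro n
    have hbn := hbpos n
    have hzae : ∀ᵐ k : EuclideanSpace ℝ (Fin 3),
        k ∉ {k : EuclideanSpace ℝ (Fin 3) | k 2 = 0} := measure_eq_zero_iff_ae_notMem.mp hZ
    have hae : ∀ᵐ k ∂(volume.restrict (B n)),
        ENNReal.ofReal (2*a^2/(1323*(b n)^3)) ≤ ENNReal.ofReal (f k) := by
      filter_upwards [ae_restrict_mem (hBm n), ae_restrict_of_ae hzae] with k hk hk2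
      obtain ⟨hc0, hc1, hc2⟩ := hk
      apply ENNReal.ofReal_le_ofReal
      apply pointwise_lower a D g hg (b n) hbn k hc0 hc1 hc2 hk2 (hDb k)
      calc |D k + a * k 2| ≤ C * |k 2|^γ * |k 2| := hDa k
        _ ≤ |a|/2 * |k 2| := mul_le_mul_of_nonneg_right
            (hkey (k 2) ((abs_lt.2 ⟨hc2.1, hc2.2⟩).le.trans (hba0 n))) (abs_nonneg _)
    calc ENNReal.ofReal (4*a^2/1323)
        = ENNReal.ofReal (2*a^2/(1323*(b n)^3)) * volume (B n) := by
          have ha2 : (0:ℝ) < a^2 :=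
            lt_of_le_of_ne (sq_nonneg a) (Ne.symm (pow_ne_zero 2 ha))
          have hb3 : (0:ℝ) < (b n)^3 := pow_pos hbn 3
          have hc0 : (0:ℝ) ≤ 2*a^2/(1323*(b n)^3) :=
            le_of_lt (div_pos (by linarith) (by nlinarith))
          have e1 : (0:ℝ) ≤ 2*b n - b n := by linarith
          have e2 : (0:ℝ) ≤ (2*b n - b n) * (2*b n - b n) := mul_nonneg e1 e1
          rw [hvol n, ← ENNReal.ofReal_mul e1, ← ENNReal.ofReal_mul e2,
            ← ENNReal.ofReal_mul hc0]
          congr 1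
          field_simp
          ring
      _ = ∫⁻ _ in B n, ENNReal.ofReal (2*a^2/(1323*(b n)^3)) := (setLIntegral_const _ _).symm
      _ ≤ ∫⁻ k in B n, ENNReal.ofReal (f k) := lintegral_mono_ae hae
  have hfin := hint.2
  rw [HasFiniteIntegral] at hfin
  have htop : (⊤:ℝ≥0∞) ≤ ∫⁻ k in {k : EuclideanSpace ℝ (Fin 3) | 0 < ‖k‖ ∧ ‖k‖ ≤ Λ},
      (‖f k‖₊ : ℝ≥0∞) := by
    calc (⊤:ℝ≥0∞) = ∑' _ : ℕ, ENNReal.ofReal (4*a^2/1323) :=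
          (ENNReal.tsum_const_eq_top_of_ne_zero
            (by rw [Ne, ENNReal.ofReal_eq_zero, not_le]; exact hκpos)).symm
      _ ≤ ∑' n, ∫⁻ k in B n, ENNReal.ofReal (f k) := ENNReal.tsum_le_tsum hlow
      _ = ∫⁻ k in ⋃ n, B n, ENNReal.ofReal (f k) := (lintegral_iUnion hBm hBdisj _).symm
      _ ≤ ∫⁻ k in {k : EuclideanSpace ℝ (Fin 3) | 0 < ‖k‖ ∧ ‖k‖ ≤ Λ},
            ENNReal.ofReal (f k) := lintegral_mono_set (Set.iUnion_subset hBsub)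
      _ ≤ _ := lintegral_mono (fun k => Real.ofReal_le_enorm _)
  exact absurd (lt_of_le_of_lt htop hfin) (by simp)

/-- Dichotomy for square-integrability of the expected photon wave function: with
`D(k) = E(P − k₃) − E(P)` and `g(k) = D(k) / (k₃·‖k‖^{1/2}·(D(k) + ‖k‖))` (set to `0`
when `k₃ = 0`), the function `k ↦ (1 − k₃²/‖k‖²)·g(k)²` is integrable on
`{0 < ‖k‖ ≤ Λ}` if and only if `E'(P) = 0`. -/
theorem stmt_10 (Λ γ C : ℝ) (hΛ0 : 0 < Λ) (hΛ1 : Λ ≤ 1) (hγ0 : 0 < γ) (hγ1 : γ < 1)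
    (hC : 0 ≤ C) (E : ℝ → ℝ) (hE : Differentiable ℝ E)
    (hE' : ∀ x : ℝ, |deriv E x| ≤ 3 / 4)
    (hHol : ∀ x y : ℝ, |deriv E x - deriv E y| ≤ C * |x - y| ^ γ)
    (P : ℝ) (D g : EuclideanSpace ℝ (Fin 3) → ℝ)
    (hD : ∀ k : EuclideanSpace ℝ (Fin 3), D k = E (P - k 2) - E P)
    (hg : ∀ k : EuclideanSpace ℝ (Fin 3),
      g k = if k 2 = 0 then 0
        else D k / (k 2 * ‖k‖ ^ ((1 : ℝ) / 2) * (D k + ‖k‖))) :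
    (IntegrableOn
        (fun k : EuclideanSpace ℝ (Fin 3) => (1 - (k 2) ^ 2 / ‖k‖ ^ 2) * (g k) ^ 2)
        {k : EuclideanSpace ℝ (Fin 3) | 0 < ‖k‖ ∧ ‖k‖ ≤ Λ}) ↔ deriv E P = 0 := by
  have hDb : ∀ k : EuclideanSpace ℝ (Fin 3), |D k| ≤ 3/4 * |k 2| := by
    intro k
    rw [hD k]
    exact (mvt_bound C γ hγ0 hC E hE hE' hHol P (k 2)).1
  have hDa : ∀ k : EuclideanSpace ℝ (Fin 3),
      |D k + deriv E P * k 2| ≤ C * |k 2| ^ γ * |k 2| := by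
    intro k
    rw [hD k]
    exact (mvt_bound C γ hγ0 hC E hE hE' hHol P (k 2)).2
  constructor
  · intro hint
    by_contra ha
    exact not_integrable Λ γ C (deriv E P) hΛ0 hγ0 hC ha D g hg hDb hDa hint
  · intro h0
    have h2m : Measurable fun k : EuclideanSpace ℝ (Fin 3) => k 2 :=
      (measurable_pi_apply 2).comp (WithLp.measurable_ofLp 2 (Fin 3 → ℝ))
    have hDm : Measurable D := by
      rw [funext hD]
      exact (hE.continuous.measurable.comp (measurable_const.sub h2m)).sub measurable_const
    have hnorm : Measurable fun k : EuclideanSpace ℝ (Fin 3) => ‖k‖ :=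
      continuous_norm.measurable
    have hgm : Measurable g := by
      rw [funext hg]
      apply Measurable.ite (h2m (measurableSet_singleton 0)) measurable_const
      exact hDm.div ((h2m.mul ((Real.continuous_rpow_const
        (by norm_num)).measurable.comp hnorm)).mul (hDm.add hnorm))
    have hfm : Measurable fun k : EuclideanSpace ℝ (Fin 3) =>
        (1 - (k 2)^2/‖k‖^2) * (g k)^2 :=
      (measurable_const.sub ((h2m.pow_const 2).div (hnorm.pow_const 2))).mul (hgm.pow_const 2)
    apply annuli_integrable Λ γ (16*C^2) hΛ0 hγ0 hγ1 (by positivity) _ hfm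
    intro k hk
    apply pointwise_upper γ C hγ0 hC D g hg hDb _ k hk
    intro k'
    have h := hDa k'
    rw [h0] at h
    simpa using h
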